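/- The set H := {(u, q, s) ∈ ℝ³ : s ≥ 0 and u ∈ H_{s,b}(q)} is closed in ℝ³ for every fixed b ∈ (0,∞). In particular, if uₙ → u, qₙ → q, sₙ → s with sₙ ≥ 0 and uₙ ∈ H_{sₙ,b}(qₙ), then u ∈ H_{s,b}(q). -/
import Mathlib


open Filter Topology

/-- The "L⁰ norm" of a real number: 0 if `u = 0`, else 1. -/
noncomputable def nrm0 (u : ℝ) : ℝ := if u = 0 then 0 else 1

/-- `H_{s,b}(q)`: the set of global minimizers of `v ↦ -q·v + v²/2 + s·|v|₀`
over `{v : |v| ≤ b}`. -/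
def Hsb (s b q : ℝ) : Set ℝ :=
  {u | |u| ≤ b ∧ ∀ v : ℝ, |v| ≤ b →
        -q * u + u ^ 2 / 2 + s * nrm0 u ≤ -q * v + v ^ 2 / 2 + s * nrm0 v}

lemma Hsb_seq_limit (b : ℝ) (un qn sn : ℕ → ℝ) (u q s : ℝ)
    (hu : Filter.Tendsto un atTop (𝓝 u)) (hq : Filter.Tendsto qn atTop (𝓝 q))
    (hs : Filter.Tendsto sn atTop (𝓝 s))
    (hsn : ∀ n, 0 ≤ sn n) (hmem : ∀ n, un n ∈ Hsb (sn n) b (qn n)) :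
    u ∈ Hsb s b q := by
  constructor
  · exact le_of_tendsto' hu.abs fun n => (hmem n).1
  · intro v hv
    -- the values at v converge
    have hgv : Tendsto (fun n => -qn n * v + v ^ 2 / 2 + sn n * nrm0 v) atTop
        (𝓝 (-q * v + v ^ 2 / 2 + s * nrm0 v)) := by
      exact (((hq.neg.mul tendsto_const_nhds).add tendsto_const_nhds).add
        (hs.mul tendsto_const_nhds))
    by_cases hu0 : u = 0
    · -- nrm0 u = 0, use lower bound -qₙuₙ + uₙ²/2
      have hfu : Tendsto (fun n => -qn n * un n + un n ^ 2 / 2) atTop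
          (𝓝 (-q * u + u ^ 2 / 2 + s * nrm0 u)) := by
        have : -q * u + u ^ 2 / 2 + s * nrm0 u = -q * u + u ^ 2 / 2 := by
          simp [nrm0, hu0]
        rw [this]
        exact (hq.neg.mul hu).add ((hu.pow 2).div_const 2)
      refine le_of_tendsto_of_tendsto' hfu hgv fun n => ?_
      have h1 : -qn n * un n + un n ^ 2 / 2 ≤
          -qn n * un n + un n ^ 2 / 2 + sn n * nrm0 (un n) := by
        have : 0 ≤ sn n * nrm0 (un n) := by
          apply mul_nonneg (hsn n)
          unfold nrm0; split <;> norm_num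
        linarith
      exact h1.trans ((hmem n).2 v hv)
    · -- eventually un n ≠ 0, so nrm0 (un n) = 1 = nrm0 u eventually
      have hev : ∀ᶠ n in atTop, un n ≠ 0 := by
        have : ∀ᶠ n in atTop, un n ∈ {x : ℝ | x ≠ 0} :=
          hu (isOpen_ne.mem_nhds hu0)
        exact this
      have hfu : Tendsto (fun n => -qn n * un n + un n ^ 2 / 2 + sn n * nrm0 (un n))
          atTop (𝓝 (-q * u + u ^ 2 / 2 + s * nrm0 u)) := by
        have hcont : Tendsto (fun n => -qn n * un n + un n ^ 2 / 2 + sn n * 1)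
            atTop (𝓝 (-q * u + u ^ 2 / 2 + s * 1)) :=
          ((hq.neg.mul hu).add ((hu.pow 2).div_const 2)).add (hs.mul tendsto_const_nhds)
        have heq : nrm0 u = 1 := by simp [nrm0, hu0]
        rw [heq]
        refine Tendsto.congr' ?_ hcont
        filter_upwards [hev] with n hn
        simp [nrm0, hn]
      exact le_of_tendsto_of_tendsto' hfu hgv fun n => (hmem n).2 v hv

/-- The set `H = {(u,q,s) : s ≥ 0, u ∈ H_{s,b}(q)}` is closed in ℝ³; in particular
if `uₙ → u`, `qₙ → q`, `sₙ → s` with `sₙ ≥ 0` and `uₙ ∈ H_{sₙ,b}(qₙ)` then `u ∈ H_{s,b}(q)`. -/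
theorem Hsb_graph_closed_in_s (b : ℝ) (hb : 0 < b) :
    IsClosed {p : ℝ × ℝ × ℝ | 0 ≤ p.2.2 ∧ p.1 ∈ Hsb p.2.2 b p.2.1} ∧
    (∀ (un qn sn : ℕ → ℝ) (u q s : ℝ),
      Tendsto un atTop (𝓝 u) → Tendsto qn atTop (𝓝 q) → Tendsto sn atTop (𝓝 s) →
      (∀ n, 0 ≤ sn n) → (∀ n, un n ∈ Hsb (sn n) b (qn n)) →
      u ∈ Hsb s b q) := by
  constructor
  · apply IsSeqClosed.isClosed
    intro x p hx hxp
    have h1 : Tendsto (fun n => (x n).1) atTop (𝓝 p.1) :=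
      (continuous_fst.tendsto p).comp hxp
    have h2 : Tendsto (fun n => (x n).2.1) atTop (𝓝 p.2.1) :=
      ((continuous_fst.comp continuous_snd).tendsto p).comp hxp
    have h3 : Tendsto (fun n => (x n).2.2) atTop (𝓝 p.2.2) :=
      ((continuous_snd.comp continuous_snd).tendsto p).comp hxp
    refine ⟨ge_of_tendsto' h3 fun n => (hx n).1, ?_⟩
    exact Hsb_seq_limit b _ _ _ _ _ _ h1 h2 h3 (fun n => (hx n).1) fun n => (hx n).2
  · intro un qn sn u q s hu hq hs hsn hmem
    exact Hsb_seq_limit b un qn sn u q s hu hq hs hsn hmem
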